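/- Let $\preceq$ denote the modified Bruhat order on $\mathbb{Z}^n$ defined by $\lambda \preceq \mu$ iff $-\lambda \le -\mu$ in the Bruhat order induced from the extended affine Weyl group. If $\mu \in \mathbb{N}^n$ and $\lambda \in \mathbb{Z}^n$ satisfies $\lambda \preceq \mu$, then $\lambda \in \mathbb{N}^n$. -/

import Mathlib

/-- An element `t_τ ∘ u` of the extended affine Weyl group `W = Sₙ ⋉ ℤⁿ`
of type `A_{n-1}`:  `perm` is the finite part `u ∈ Sₙ`, `tr` the translation `τ`. -/
structure AffW (n : ℕ) where
  perm : Equiv.Perm (Fin n)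
  tr : Fin n → ℤ

namespace AffW

variable {n : ℕ}

/-- The affine action on `X = ℤⁿ` : `(t_τ u)(x) = u·x + τ` where `(u·x)_i = x_{u⁻¹ i}`. -/
def act (w : AffW n) (x : Fin n → ℤ) : Fin n → ℤ :=
  fun i => x (w.perm⁻¹ i) + w.tr i

/-- Group multiplication (composition of affine maps). -/
def mul (a b : AffW n) : AffW n :=
  ⟨a.perm * b.perm, fun i => b.tr (a.perm⁻¹ i) + a.tr i⟩

def one (n : ℕ) : AffW n := ⟨1, 0⟩

/-- An affine root `ε_i - ε_j + k`, recorded as the data `(i, j, k)`. -/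
abbrev Root (n : ℕ) := Fin n × Fin n × ℤ

/-- A positive affine root: `Δ⁺ = Δ_f⁺ ∪ (Δ_f + ℤ_{>0})`. -/
def IsPos (α : Root n) : Prop := 0 < α.2.2 ∨ (α.2.2 = 0 ∧ α.1 < α.2.1)

/-- A negative affine root. -/
def IsNeg (α : Root n) : Prop := IsPos (α.2.1, α.1, -α.2.2)

/-- Action of `w` on affine roots, determined by `(wα)(x) = α(w⁻¹x)`. -/
def rootAct (w : AffW n) (α : Root n) : Root n :=
  (w.perm α.1, w.perm α.2.1, α.2.2 - w.tr (w.perm α.1) + w.tr (w.perm α.2.1))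

/-- The length `ℓ(w) = #{α ∈ Δ⁺ ∣ wα ∈ -Δ⁺}`. -/
noncomputable def len (w : AffW n) : ℕ :=
  Set.ncard {α : Root n | IsPos α ∧ IsNeg (rootAct w α)}

/-- The affine reflection `s_{ε_i - ε_j + k}` as an element of `W`. -/
def refl (i j : Fin n) (k : ℤ) : AffW n :=
  ⟨Equiv.swap i j, fun m => if m = i then -k else if m = j then k else 0⟩

/-- Bruhat covering-type relation: right multiplication by a reflection which
increases the length. -/
def BruhatStep (a b : AffW n) : Prop :=
  (∃ i j k, i ≠ j ∧ b = mul a (refl i j k)) ∧ len a < len b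

/-- The Bruhat order on the extended affine Weyl group. -/
def BruhatLe : AffW n → AffW n → Prop := Relation.ReflTransGen BruhatStep

/-- `m_τ`, the shortest element of the coset `t_τ Sₙ`. -/
noncomputable def minRep (τ : Fin n → ℤ) : AffW n :=
  ⟨(Finset.exists_min_image (Finset.univ : Finset (Equiv.Perm (Fin n)))
      (fun u => len (⟨u, τ⟩ : AffW n)) ⟨1, Finset.mem_univ 1⟩).choose, τ⟩

/-- The Bruhat order on `X = ℤⁿ` induced from the extended affine Weyl group:
`τ ≤ η ↔ m_τ ≤ m_η`. -/
noncomputable def XLe (τ η : Fin n → ℤ) : Prop := BruhatLe (minRep τ) (minRep η)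

end AffW

namespace AffW

variable {n : ℕ}


/-- The linear "height" functional detecting positivity of roots. -/
def Lr (γ : Root n) : ℤ := n * γ.2.2 + ((γ.2.1 : ℤ) - (γ.1 : ℤ))

/-- Negation of a root. -/
def negR (γ : Root n) : Root n := (γ.2.1, γ.1, -γ.2.2)

lemma negR_negR (γ : Root n) : negR (negR γ) = γ := by
  obtain ⟨a,b,m⟩ := γ; simp [negR]

lemma isNeg_iff (γ : Root n) : IsNeg γ ↔ IsPos (negR γ) := Iff.rfl

lemma Lr_negR (γ : Root n) : Lr (negR γ) = - Lr γ := by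
  simp [Lr, negR]; ring

lemma isPos_iff_Lr (γ : Root n) : IsPos γ ↔ 0 < Lr γ := by
  obtain ⟨a, b, m⟩ := γ
  have ha : (a : ℤ) < n := by exact_mod_cast a.2
  have hb : (b : ℤ) < n := by exact_mod_cast b.2
  have ha0 : (0:ℤ) ≤ a := Int.ofNat_nonneg _
  have hb0 : (0:ℤ) ≤ b := Int.ofNat_nonneg _
  simp only [IsPos, Lr]
  constructor
  · rintro (hm | ⟨hm, hab⟩)
    · have : (n:ℤ) * 1 ≤ n * m := by
        apply mul_le_mul_of_nonneg_left (by omega) (by positivity)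
      omega
    · have hab' : (a:ℤ) < b := by exact_mod_cast hab
      rw [hm, mul_zero]; omega
  · intro h
    rcases lt_trichotomy m 0 with hm | hm | hm
    · exfalso
      have : (n:ℤ) * m ≤ n * (-1) := by
        apply mul_le_mul_of_nonneg_left (by omega) (by positivity)
      omega
    · right; refine ⟨hm, ?_⟩
      have hab : (a:ℤ) < b := by rw [hm, mul_zero] at h; omega
      exact_mod_cast hab
    · left; exact hm

lemma isNeg_iff_Lr (γ : Root n) : IsNeg γ ↔ Lr γ < 0 := by
  rw [isNeg_iff, isPos_iff_Lr, Lr_negR]; omega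

lemma not_pos_and_neg (γ : Root n) : ¬ (IsPos γ ∧ IsNeg γ) := by
  rw [isPos_iff_Lr, isNeg_iff_Lr]; omega

lemma rootAct_mul (a b : AffW n) (γ : Root n) :
    rootAct (mul a b) γ = rootAct a (rootAct b γ) := by
  obtain ⟨a,b,m⟩ := γ
  refine Prod.ext ?_ (Prod.ext ?_ ?_) <;>
    simp [rootAct, mul, Equiv.Perm.mul_apply, mul_inv_rev] <;> ring

lemma rootAct_one (γ : Root n) : rootAct (one n) γ = γ := by
  simp [rootAct, one]

lemma rootAct_negR (w : AffW n) (γ : Root n) :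
    rootAct w (negR γ) = negR (rootAct w γ) := by
  obtain ⟨a,b,m⟩ := γ
  refine Prod.ext ?_ (Prod.ext ?_ ?_) <;> simp [rootAct, negR] <;> ring

lemma Lr_rootAct_eq_zero {w : AffW n} {γ : Root n} (h : Lr (rootAct w γ) = 0) :
    Lr γ = 0 := by
  obtain ⟨a, b, m⟩ := γ
  have key : ∀ (δ : Root n), Lr δ = 0 → δ.1 = δ.2.1 ∧ δ.2.2 = 0 := by
    intro δ hδ
    obtain ⟨c, d, e⟩ := δ
    have hc : (c : ℤ) < n := by exact_mod_cast c.2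
    have hd : (d : ℤ) < n := by exact_mod_cast d.2
    have hc0 : (0:ℤ) ≤ c := Int.ofNat_nonneg _
    have hd0 : (0:ℤ) ≤ d := Int.ofNat_nonneg _
    simp only [Lr] at hδ
    rcases lt_trichotomy e 0 with he | he | he
    · exfalso
      have : (n:ℤ) * e ≤ n * (-1) := mul_le_mul_of_nonneg_left (by omega) (by positivity)
      omega
    · have : (c:ℤ) = d := by rw [he] at hδ; omega
      exact ⟨by exact_mod_cast Fin.ext (by exact_mod_cast this), by simpa using he⟩
    · exfalso
      have : (n:ℤ) * 1 ≤ n * e := mul_le_mul_of_nonneg_left (by omega) (by positivity)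
      omega
  obtain ⟨h1, h2⟩ := key _ h
  simp only [rootAct] at h1 h2
  have hab : a = b := w.perm.injective h1
  subst hab
  simp only [Lr]
  simp at h2 ⊢
  omega

/-- The inversion set. -/
def Inv (w : AffW n) : Set (Root n) := {γ | IsPos γ ∧ IsNeg (rootAct w γ)}

lemma len_eq (w : AffW n) : len w = (Inv w).ncard := rfl

lemma inv_finite (w : AffW n) : (Inv w).Finite := by
  classical
  set S : ℕ := Finset.univ.sup (fun i => (w.tr i).natAbs) with hS
  apply Set.Finite.subset
    (Set.Finite.prod (Set.finite_univ (α := Fin n))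
      (Set.Finite.prod (Set.finite_univ (α := Fin n)) (Set.finite_Icc (0:ℤ) (2*S))))
  rintro ⟨a, b, m⟩ ⟨hpos, hneg⟩
  have h1 : (w.tr (w.perm a)).natAbs ≤ S :=
    Finset.le_sup (f := fun i => (w.tr i).natAbs) (Finset.mem_univ _)
  have h2 : (w.tr (w.perm b)).natAbs ≤ S :=
    Finset.le_sup (f := fun i => (w.tr i).natAbs) (Finset.mem_univ _)
  simp only [IsPos, IsNeg, rootAct] at hpos hneg
  have hm0 : 0 ≤ m := by rcases hpos with h | ⟨h, _⟩ <;> omega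
  have hm1 : m - w.tr (w.perm a) + w.tr (w.perm b) ≤ 0 := by
    rcases hneg with h | ⟨h, _⟩ <;> omega
  simp only [Set.mem_prod, Set.mem_univ, Set.mem_Icc, true_and]
  omega

lemma refl_symm {i j : Fin n} (hij : i ≠ j) (k : ℤ) : refl i j k = refl j i (-k) := by
  simp only [refl, AffW.mk.injEq]
  refine ⟨Equiv.swap_comm i j, funext fun m => ?_⟩
  by_cases h1 : m = i <;> by_cases h2 : m = j <;> simp_all

lemma mul_refl_refl {i j : Fin n} (hij : i ≠ j) (k : ℤ) :
    mul (refl i j k) (refl i j k) = one n := by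
  simp only [mul, refl, one, AffW.mk.injEq]
  refine ⟨Equiv.swap_mul_self i j, funext fun m => ?_⟩
  simp only [Equiv.swap_inv]
  have hji : ¬ j = i := fun h => hij h.symm
  by_cases h1 : m = i <;> by_cases h2 : m = j <;>
    simp_all [Equiv.swap_apply_left, Equiv.swap_apply_right, Equiv.swap_apply_of_ne_of_ne]

lemma rootAct_refl_refl {i j : Fin n} (hij : i ≠ j) (k : ℤ) (γ : Root n) :
    rootAct (refl i j k) (rootAct (refl i j k) γ) = γ := by
  rw [← rootAct_mul, mul_refl_refl hij, rootAct_one]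

lemma rootAct_refl_root {i j : Fin n} (hij : i ≠ j) (k : ℤ) :
    rootAct (refl i j k) (i, j, k) = negR (i, j, k) := by
  simp [rootAct, refl, negR, Equiv.swap_apply_left, Equiv.swap_apply_right, hij, hij.symm]

/-- Embedding of roots into the ambient module. -/
def rho (γ : Root n) : (Fin n → ℤ) × ℤ :=
  (Pi.single γ.1 1 - Pi.single γ.2.1 1, γ.2.2)

/-- Action of `w` on the ambient module. -/
def tw (w : AffW n) (x : (Fin n → ℤ) × ℤ) : (Fin n → ℤ) × ℤ :=
  (fun m => x.1 (w.perm⁻¹ m), x.2 - ∑ m, w.tr m * x.1 (w.perm⁻¹ m))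

/-- The positivity functional on the ambient module. -/
def Lfun (x : (Fin n → ℤ) × ℤ) : ℤ := n * x.2 - ∑ m : Fin n, (m : ℤ) * x.1 m

lemma Lfun_rho (γ : Root n) : Lfun (rho γ) = Lr γ := by
  obtain ⟨a, b, m⟩ := γ
  simp only [Lfun, rho, Lr, Pi.sub_apply, Pi.single_apply]
  have : ∀ c : Fin n, (∑ x : Fin n, (x:ℤ) * (if x = c then (1:ℤ) else 0)) = (c:ℤ) := by
    intro c; simp [mul_ite]
  rw [Finset.sum_congr rfl (fun x _ => by rw [mul_sub])]
  rw [Finset.sum_sub_distrib, this, this]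
  ring

lemma rho_negR (γ : Root n) : rho (negR γ) = - rho γ := by
  obtain ⟨a, b, m⟩ := γ
  simp only [rho, negR, Prod.neg_mk, neg_sub]

lemma rho_rootAct (w : AffW n) (γ : Root n) : rho (rootAct w γ) = tw w (rho γ) := by
  obtain ⟨a, b, m⟩ := γ
  have hiff : ∀ (c : Fin n) (x : Fin n), w.perm⁻¹ x = c ↔ x = w.perm c := by
    intro c x; constructor
    · intro h; rw [← h]; simp
    · intro h; rw [h]; simp
  refine Prod.ext (funext fun x => ?_) ?_
  · simp only [rho, rootAct, tw, Pi.sub_apply, Pi.single_apply]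
    rw [if_congr (hiff a x) rfl rfl, if_congr (hiff b x) rfl rfl]
  · simp only [rho, rootAct, tw, Pi.sub_apply, Pi.single_apply]
    have hsum : ∀ c : Fin n,
        (∑ x : Fin n, w.tr x * (if w.perm⁻¹ x = c then (1:ℤ) else 0)) = w.tr (w.perm c) := by
      intro c
      rw [Finset.sum_congr rfl (fun x _ => by rw [if_congr (hiff c x) rfl rfl])]
      simp [mul_ite]
    rw [Finset.sum_congr rfl (fun x _ => by rw [mul_sub])]
    rw [Finset.sum_sub_distrib, hsum, hsum]
    ring

lemma tw_add (w : AffW n) (x y : (Fin n → ℤ) × ℤ) : tw w (x + y) = tw w x + tw w y := by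
  refine Prod.ext (funext fun m => rfl) ?_
  simp only [tw, Prod.snd_add, Prod.fst_add, Pi.add_apply, Prod.snd]
  rw [Finset.sum_congr rfl (fun x _ => by rw [mul_add]), Finset.sum_add_distrib]
  ring

lemma tw_smul (w : AffW n) (c : ℤ) (x : (Fin n → ℤ) × ℤ) : tw w (c • x) = c • tw w x := by
  refine Prod.ext (funext fun m => rfl) ?_
  simp only [tw, Prod.smul_snd, Prod.smul_fst, Pi.smul_apply, smul_eq_mul]
  rw [Finset.sum_congr rfl (fun m _ =>
    show w.tr m * (c * x.1 (w.perm⁻¹ m)) = (w.tr m * x.1 (w.perm⁻¹ m)) * c from by ring),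
    ← Finset.sum_mul]
  ring

lemma Lfun_add (x y : (Fin n → ℤ) × ℤ) : Lfun (x + y) = Lfun x + Lfun y := by
  simp only [Lfun, Prod.snd_add, Prod.fst_add, Pi.add_apply]
  rw [Finset.sum_congr rfl (fun x _ => by rw [mul_add]), Finset.sum_add_distrib]
  push_cast
  ring

lemma Lfun_smul (c : ℤ) (x : (Fin n → ℤ) × ℤ) : Lfun (c • x) = c * Lfun x := by
  simp only [Lfun, Prod.smul_snd, Prod.smul_fst, Pi.smul_apply, smul_eq_mul]
  rw [Finset.sum_congr rfl (fun (p : Fin n) _ =>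
    show (p:ℤ) * (c * x.1 p) = ((p:ℤ) * x.1 p) * c from by ring),
    ← Finset.sum_mul]
  ring

lemma sub_tw_refl {i j : Fin n} (hij : i ≠ j) (k : ℤ) (x : (Fin n → ℤ) × ℤ) :
    x - tw (refl i j k) x = (x.1 i - x.1 j) • rho ((i, j, k) : Root n) := by
  have hperm : (refl i j k).perm⁻¹ = Equiv.swap i j := by
    simp [refl, Equiv.swap_inv]
  have hji : ¬ j = i := fun h => hij h.symm
  refine Prod.ext (funext fun m => ?_) ?_
  · simp only [tw, rho, hperm, Prod.fst_sub, Pi.sub_apply, Prod.smul_fst, Pi.smul_apply,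
      smul_eq_mul, Pi.single_apply]
    by_cases h1 : m = i
    · subst h1; simp [Equiv.swap_apply_left, hij, hji]
    · by_cases h2 : m = j
      · subst h2; simp [Equiv.swap_apply_right, hij, hji]
      · simp [Equiv.swap_apply_of_ne_of_ne h1 h2, h1, h2]
  · simp only [tw, rho, hperm, Prod.snd_sub, Prod.smul_snd, smul_eq_mul]
    have hsummand : ∀ m : Fin n, (refl i j k).tr m * x.1 (Equiv.swap i j m) =
        (if m = i then (-k) * x.1 (Equiv.swap i j m) else 0) +
        (if m = j then k * x.1 (Equiv.swap i j m) else 0) := by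
      intro m
      simp only [refl]
      by_cases h1 : m = i
      · subst h1; simp [hij]
      · by_cases h2 : m = j
        · subst h2; simp [hji]
        · simp [h1, h2]
    rw [Finset.sum_congr rfl (fun m _ => hsummand m), Finset.sum_add_distrib,
      Finset.sum_ite_eq' Finset.univ i, Finset.sum_ite_eq' Finset.univ j]
    simp [Equiv.swap_apply_left, Equiv.swap_apply_right]
    ring

lemma pair_neg {i j : Fin n} {k : ℤ} (hij : i ≠ j) (hpos : IsPos ((i,j,k) : Root n))
    (w : AffW n) (hwneg : IsNeg (rootAct w (i,j,k)))
    {γ : Root n} (hγpos : IsPos γ)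
    (hψpos : IsPos (negR (rootAct (refl i j k) γ)))
    (hwγpos : IsPos (rootAct w γ)) :
    IsNeg (rootAct w (negR (rootAct (refl i j k) γ))) := by
  set ψγ := negR (rootAct (refl i j k) γ) with hψ
  set c := (rho γ).1 i - (rho γ).1 j with hc
  have hid : rho γ + rho ψγ = c • rho ((i,j,k) : Root n) := by
    rw [hψ, rho_negR, rho_rootAct, ← sub_eq_add_neg, sub_tw_refl hij]
  have hLα : 0 < Lr ((i,j,k) : Root n) := (isPos_iff_Lr _).mp hpos
  have hcpos : 0 < c := by
    have h1 := congrArg Lfun hid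
    rw [Lfun_add, Lfun_smul, Lfun_rho, Lfun_rho, Lfun_rho] at h1
    have h2 : 0 < Lr γ := (isPos_iff_Lr _).mp hγpos
    have h3 : 0 < Lr ψγ := (isPos_iff_Lr _).mp hψpos
    by_contra h
    push_neg at h
    nlinarith
  have happ : rho (rootAct w γ) + rho (rootAct w ψγ) = c • rho (rootAct w (i,j,k)) := by
    rw [rho_rootAct w γ, rho_rootAct w ψγ, rho_rootAct w (i,j,k), ← tw_add, hid, tw_smul]
  have hL := congrArg Lfun happ
  rw [Lfun_add, Lfun_smul, Lfun_rho, Lfun_rho, Lfun_rho] at hL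
  have h4 : Lr (rootAct w (i,j,k)) < 0 := (isNeg_iff_Lr _).mp hwneg
  have h5 : 0 < Lr (rootAct w γ) := (isPos_iff_Lr _).mp hwγpos
  rw [isNeg_iff_Lr]
  nlinarith

lemma Lr_eq_zero_iff (γ : Root n) : Lr γ = 0 ↔ γ.1 = γ.2.1 ∧ γ.2.2 = 0 := by
  obtain ⟨a, b, m⟩ := γ
  have hc : (a : ℤ) < n := by exact_mod_cast a.2
  have hd : (b : ℤ) < n := by exact_mod_cast b.2
  have hc0 : (0:ℤ) ≤ a := Int.ofNat_nonneg _
  have hd0 : (0:ℤ) ≤ b := Int.ofNat_nonneg _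
  simp only [Lr]
  constructor
  · intro h
    rcases lt_trichotomy m 0 with hm | hm | hm
    · exfalso
      have : (n:ℤ) * m ≤ n * (-1) := mul_le_mul_of_nonneg_left (by omega) (by positivity)
      omega
    · have : (a:ℤ) = b := by rw [hm, mul_zero] at h; omega
      exact ⟨Fin.ext (by exact_mod_cast this), hm⟩
    · exfalso
      have : (n:ℤ) * 1 ≤ n * m := mul_le_mul_of_nonneg_left (by omega) (by positivity)
      omega
  · rintro ⟨h1, h2⟩
    cases h1
    rw [h2, mul_zero]
    omega

lemma Lr_rootAct_zero_iff (w : AffW n) (γ : Root n) :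
    Lr (rootAct w γ) = 0 ↔ Lr γ = 0 := by
  obtain ⟨a, b, m⟩ := γ
  rw [Lr_eq_zero_iff, Lr_eq_zero_iff]
  simp only [rootAct]
  constructor
  · rintro ⟨h1, h2⟩
    have hab : a = b := w.perm.injective h1
    subst hab
    exact ⟨rfl, by omega⟩
  · rintro ⟨h1, h2⟩
    cases h1
    exact ⟨rfl, by omega⟩

lemma pos_of_not_neg {w : AffW n} {γ : Root n} (h0 : Lr γ ≠ 0)
    (h : ¬ IsNeg (rootAct w γ)) : IsPos (rootAct w γ) := by
  rw [isNeg_iff_Lr] at h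
  rw [isPos_iff_Lr]
  have h1 : Lr (rootAct w γ) ≠ 0 := fun hz => h0 ((Lr_rootAct_zero_iff w γ).mp hz)
  omega

lemma len_mul_refl_lt {i j : Fin n} {k : ℤ} (hij : i ≠ j)
    (hpos : IsPos ((i,j,k) : Root n))
    {w : AffW n} (hwneg : IsNeg (rootAct w ((i,j,k) : Root n))) :
    len (mul w (refl i j k)) < len w := by
  classical
  set r := refl i j k with hr
  set S : Set (Root n) := {γ | IsPos (rootAct r γ) ∧ IsNeg (rootAct w γ)} with hS
  have hinv : ∀ γ, rootAct r (rootAct r γ) = γ := rootAct_refl_refl hij k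
  have hrinj : Function.Injective (rootAct r) := Function.LeftInverse.injective hinv
  have hneginj : Function.Injective (negR (n := n)) := Function.LeftInverse.injective negR_negR
  have hImg : Inv (mul w r) = rootAct r '' S := by
    ext δ
    constructor
    · rintro ⟨h1, h2⟩
      rw [rootAct_mul] at h2
      exact ⟨rootAct r δ, ⟨by rw [hinv]; exact h1, h2⟩, hinv δ⟩
    · rintro ⟨γ, ⟨h1, h2⟩, rfl⟩
      exact ⟨h1, by rw [rootAct_mul, hinv]; exact h2⟩
  have hSdecomp : S = (Inv w \ Inv r) ∪ negR '' (Inv r \ Inv w) := by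
    ext γ
    simp only [Set.mem_union, Set.mem_diff, Set.mem_image, hS, Set.mem_setOf_eq, Inv]
    constructor
    · rintro ⟨h1, h2⟩
      have h0 : Lr γ ≠ 0 := by
        intro h0
        have := (Lr_rootAct_zero_iff r γ).mpr h0
        rw [isPos_iff_Lr] at h1
        omega
      rcases lt_or_gt_of_ne h0 with hneg | hp
      · right
        refine ⟨negR γ, ⟨⟨?_, ?_⟩, ?_⟩, negR_negR γ⟩
        · rw [isPos_iff_Lr, Lr_negR]
          omega
        · rw [rootAct_negR]
          rw [isNeg_iff, negR_negR]
          exact h1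
        · rintro ⟨-, hn⟩
          rw [rootAct_negR, isNeg_iff, negR_negR] at hn
          exact not_pos_and_neg _ ⟨hn, h2⟩
      · left
        have hγpos : IsPos γ := (isPos_iff_Lr _).mpr hp
        exact ⟨⟨hγpos, h2⟩, fun hmem => not_pos_and_neg _ ⟨h1, hmem.2⟩⟩
    · rintro (⟨⟨hp, hn⟩, hnotr⟩ | ⟨δ, ⟨⟨hp, hn⟩, hnot⟩, rfl⟩)
      · have h0 : Lr γ ≠ 0 := ne_of_gt ((isPos_iff_Lr _).mp hp)
        exact ⟨pos_of_not_neg h0 (fun hneg => hnotr ⟨hp, hneg⟩), hn⟩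
      · have h0 : Lr δ ≠ 0 := ne_of_gt ((isPos_iff_Lr _).mp hp)
        refine ⟨?_, ?_⟩
        · rw [rootAct_negR, isPos_iff_Lr, Lr_negR]
          rw [isNeg_iff_Lr] at hn
          omega
        · rw [rootAct_negR, isNeg_iff, negR_negR]
          exact pos_of_not_neg h0 (fun hneg => hnot ⟨hp, hneg⟩)
  -- finiteness
  have hfinw : (Inv w).Finite := inv_finite w
  have hfinr : (Inv r).Finite := inv_finite r
  have hfinS : S.Finite := by
    rw [hSdecomp]
    exact (hfinw.diff).union ((hfinr.diff).image _)
  -- the injection ψ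
  have hαmem : ((i,j,k) : Root n) ∈ Inv w ∩ Inv r := by
    refine ⟨⟨hpos, hwneg⟩, hpos, ?_⟩
    rw [rootAct_refl_root hij, isNeg_iff, negR_negR]
    exact hpos
  have hinj : (Inv r \ Inv w).ncard ≤ ((Inv w ∩ Inv r) \ {((i,j,k) : Root n)}).ncard := by
    refine Set.ncard_le_ncard_of_injOn (fun γ => negR (rootAct r γ)) ?_
      (Function.Injective.injOn (hneginj.comp hrinj)) ((hfinw.inter_of_left _).diff)
    rintro γ ⟨⟨hp, hnr⟩, hnot⟩
    have hnotneg : ¬ IsNeg (rootAct w γ) := fun hneg => hnot ⟨hp, hneg⟩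
    have h0 : Lr γ ≠ 0 := ne_of_gt ((isPos_iff_Lr _).mp hp)
    have hψpos : IsPos (negR (rootAct r γ)) := by
      rw [← isNeg_iff]; exact hnr
    have hwγpos : IsPos (rootAct w γ) := pos_of_not_neg h0 hnotneg
    have hψneg : IsNeg (rootAct w (negR (rootAct r γ))) :=
      pair_neg hij hpos w hwneg hp hψpos hwγpos
    refine ⟨⟨⟨hψpos, hψneg⟩, hψpos, ?_⟩, ?_⟩
    · rw [rootAct_negR, hinv, isNeg_iff, negR_negR]
      exact hp
    · intro hEq
      simp only [Set.mem_singleton_iff] at hEq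
      have h1 : rootAct r γ = negR ((i,j,k) : Root n) := by rw [← hEq, negR_negR]
      have h2 : γ = rootAct r (negR ((i,j,k) : Root n)) := by rw [← h1, hinv]
      have h3 : γ = ((i,j,k) : Root n) := by
        rw [h2, rootAct_negR, rootAct_refl_root hij, negR_negR]
      exact hnot (h3 ▸ ⟨hpos, hwneg⟩)
  -- counting
  have hlenwr : len (mul w r) = S.ncard := by
    rw [len_eq, hImg, Set.ncard_image_of_injective S hrinj]
  have hcard1 : S.ncard = (Inv w \ Inv r).ncard + (Inv r \ Inv w).ncard := by
    rw [hSdecomp, Set.ncard_union_eq ?disj ((hfinw.diff)) ((hfinr.diff).image _),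
      Set.ncard_image_of_injective _ hneginj]
    case disj =>
      rw [Set.disjoint_left]
      rintro γ ⟨⟨hp, -⟩, -⟩ ⟨δ, ⟨⟨hp2, -⟩, -⟩, rfl⟩
      rw [isPos_iff_Lr] at hp hp2
      rw [Lr_negR] at hp
      omega
  have hcard2 : ((Inv w ∩ Inv r) \ {((i,j,k) : Root n)}).ncard
      = (Inv w ∩ Inv r).ncard - 1 :=
    Set.ncard_diff_singleton_of_mem hαmem
  have hcard3 : (Inv w \ Inv r).ncard + (Inv w ∩ Inv r).ncard = (Inv w).ncard := by
    rw [← Set.ncard_union_eq Set.disjoint_sdiff_inter (hfinw.diff)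
      (hfinw.inter_of_left _), Set.diff_union_inter]
  have hpos1 : 0 < (Inv w ∩ Inv r).ncard :=
    (Set.ncard_pos (hfinw.inter_of_left _)).mpr ⟨_, hαmem⟩
  rw [len_eq w, hlenwr]
  omega

/-- The monotone statistic: sum of positive parts of the translation. -/
def D (τ : Fin n → ℤ) : ℤ := ∑ i, max (τ i) 0

lemma max_arith (x y k : ℤ) (hk : 0 ≤ k) (h : 0 ≤ k - x + y) :
    max x 0 + max y 0 ≤ max (x - k) 0 + max (y + k) 0 := by
  simp only [max_def]
  split_ifs <;> omega

lemma notPos_symm {i j : Fin n} (hij : i ≠ j) (k : ℤ)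
    (h : ¬ IsPos ((i,j,k) : Root n)) : IsPos ((j,i,-k) : Root n) := by
  simp only [IsPos, not_or, not_and] at h ⊢
  rcases lt_trichotomy k 0 with hk | hk | hk
  · left; omega
  · right
    exact ⟨by omega, lt_of_le_of_ne (not_lt.mp (h.2 hk)) hij.symm⟩
  · exact absurd hk (by omega)

lemma D_le_aux {i j : Fin n} {k : ℤ} (hij : i ≠ j) (hpos : IsPos ((i,j,k) : Root n))
    (a : AffW n) (hlen : len a < len (mul a (refl i j k))) :
    D a.tr ≤ D (mul a (refl i j k)).tr := by
  classical
  have h0 : Lr ((i,j,k) : Root n) ≠ 0 := ne_of_gt ((isPos_iff_Lr _).mp hpos)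
  have hact : IsPos (rootAct a (i,j,k)) := by
    by_contra hneg
    have hne : Lr (rootAct a (i,j,k)) ≠ 0 :=
      fun hz => h0 ((Lr_rootAct_zero_iff a _).mp hz)
    rw [isPos_iff_Lr] at hneg
    have : IsNeg (rootAct a (i,j,k)) := by rw [isNeg_iff_Lr]; omega
    exact absurd hlen (not_lt_of_gt (len_mul_refl_lt hij hpos this))
  set p := a.perm i with hp
  set q := a.perm j with hq
  have hqp : q ≠ p := fun h => hij.symm (a.perm.injective h)
  have hinvp : a.perm⁻¹ p = i := by simp [hp]
  have hinvq : a.perm⁻¹ q = j := by simp [hq]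
  have htrp : (mul a (refl i j k)).tr p = a.tr p - k := by
    have hv : (refl i j k).tr i = -k := by simp [refl]
    simp only [mul, hinvp, hv]
    ring
  have htrq : (mul a (refl i j k)).tr q = a.tr q + k := by
    have hv : (refl i j k).tr j = k := by simp [refl, hij.symm]
    simp only [mul, hinvq, hv]
    ring
  have htro : ∀ m, m ≠ p → m ≠ q → (mul a (refl i j k)).tr m = a.tr m := by
    intro m hmp hmq
    have h1 : a.perm⁻¹ m ≠ i := fun h => hmp (by rw [hp, ← h]; simp)
    have h2 : a.perm⁻¹ m ≠ j := fun h => hmq (by rw [hq, ← h]; simp)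
    have hv : (refl i j k).tr (a.perm⁻¹ m) = 0 := by
      show (if a.perm⁻¹ m = i then -k else if a.perm⁻¹ m = j then k else 0) = 0
      rw [if_neg h1, if_neg h2]
    simp only [mul, hv]
    ring
  -- inequalities from positivity
  have hk0 : 0 ≤ k := by
    rcases hpos with h | ⟨h, -⟩
    · exact le_of_lt h
    · exact le_of_eq h.symm
  have hkxy : 0 ≤ k - a.tr p + a.tr q := by
    have : rootAct a (i,j,k) = (p, q, k - a.tr p + a.tr q) := rfl
    rw [this] at hact
    rcases hact with h | ⟨h, -⟩
    · exact le_of_lt h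
    · exact le_of_eq h.symm
  -- sum manipulation
  have key : ∀ f : Fin n → ℤ, (∑ m, max (f m) 0) =
      max (f p) 0 + max (f q) 0 + ∑ m ∈ (Finset.univ.erase p).erase q, max (f m) 0 := by
    intro f
    rw [← Finset.add_sum_erase _ _ (Finset.mem_univ p),
        ← Finset.add_sum_erase _ (fun m => max (f m) 0)
          (Finset.mem_erase.mpr ⟨hqp, Finset.mem_univ q⟩)]
    ring
  simp only [D, key]
  have hrest : (∑ m ∈ (Finset.univ.erase p).erase q, max ((mul a (refl i j k)).tr m) 0)
      = ∑ m ∈ (Finset.univ.erase p).erase q, max (a.tr m) 0 := by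
    refine Finset.sum_congr rfl fun m hm => ?_
    rw [Finset.mem_erase, Finset.mem_erase] at hm
    rw [htro m hm.2.1 hm.1]
  rw [hrest, htrp, htrq]
  have := max_arith (a.tr p) (a.tr q) k hk0 hkxy
  omega

lemma D_mono {a b : AffW n} (h : BruhatStep a b) : D a.tr ≤ D b.tr := by
  obtain ⟨⟨i, j, k, hij, rfl⟩, hlen⟩ := h
  by_cases hp : IsPos ((i,j,k) : Root n)
  · exact D_le_aux hij hp a hlen
  · have hp' : IsPos ((j,i,-k) : Root n) := notPos_symm hij k hp
    rw [refl_symm hij k] at hlen ⊢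
    exact D_le_aux hij.symm hp' a hlen


end AffW

open AffW in
/-- If `μ ∈ ℕⁿ` and `λ ⪯ μ` in the modified Bruhat order
(`λ ⪯ μ ↔ -λ ≤ -μ`), then `λ ∈ ℕⁿ`. -/
theorem closed_under_prec (n : ℕ) (lam mu : Fin n → ℤ)
    (hmu : ∀ i, 0 ≤ mu i)
    (hle : XLe (fun i => -lam i) (fun i => -mu i)) :
    ∀ i, 0 ≤ lam i := by
  intro i0
  have hmono : ∀ {x y : AffW n}, BruhatLe x y → D x.tr ≤ D y.tr := by
    intro x y h
    induction h with
    | refl => exact le_refl _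
    | tail hxy hstep ih => exact le_trans ih (D_mono hstep)
  have h1 : D (fun i => -lam i) ≤ D (fun i => -mu i) := hmono hle
  have h2 : D (fun i => -mu i) = 0 :=
    Finset.sum_eq_zero fun i _ =>
      max_eq_right (show -mu i ≤ 0 by have := hmu i; omega)
  have h5 : max (-lam i0) 0 ≤ D (fun i => -lam i) :=
    Finset.single_le_sum (fun i _ => le_max_right (-lam i) 0) (Finset.mem_univ i0)
  have h6 := le_max_left (-lam i0) 0
  linarith
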